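/- Let S be a Noetherian domain and T a ring extension of S which is free of rank 2 as an S-module (e.g., T = S[Z]/(g − Z²)). Then T has at most two associated primes. -/

import Mathlib

open TensorProduct

attribute [local instance] Algebra.TensorProduct.rightAlgebra

/-- A commutative algebra of finite dimension 2 over a field has at most two primes. -/
theorem aux_two_primes (K A : Type*) [Field K] [CommRing A] [Algebra K A]
    [Module.Finite K A] (h2 : Module.finrank K A = 2) :
    ∃ P Q : Ideal A, ∀ r : Ideal A, r.IsPrime → r = P ∨ r = Q := by
  by_contra h
  push_neg at h
  obtain ⟨r₁, hr₁, -, -⟩ := h ⊥ ⊥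
  obtain ⟨r₂, hr₂, hne₂, -⟩ := h r₁ r₁
  obtain ⟨r₃, hr₃, hne₃₁, hne₃₂⟩ := h r₁ r₂
  haveI : IsArtinianRing A := isArtinian_of_tower K inferInstance
  have hmax : ∀ r : Ideal A, r.IsPrime → r.IsMaximal := fun r hr =>
    (IsArtinianRing.isPrime_iff_isMaximal r).mp hr
  set I : Fin 3 → Ideal A := ![r₁, r₂, r₃] with hI
  have cop : ∀ a b : Ideal A, a.IsPrime → b.IsPrime → a ≠ b → IsCoprime a b :=
    fun a b ha hb hab =>
      Ideal.isCoprime_iff_sup_eq.mpr ((hmax a ha).coprime_of_ne (hmax b hb) hab)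
  have hpair : Pairwise fun i j => IsCoprime (I i) (I j) := by
    intro i j hij
    fin_cases i <;> fin_cases j <;>
      first
        | exact absurd rfl hij
        | exact cop _ _ hr₁ hr₂ (fun e => hne₂ e.symm)
        | exact cop _ _ hr₂ hr₁ hne₂
        | exact cop _ _ hr₁ hr₃ (fun e => hne₃₁ e.symm)
        | exact cop _ _ hr₃ hr₁ hne₃₁
        | exact cop _ _ hr₂ hr₃ (fun e => hne₃₂ e.symm)
        | exact cop _ _ hr₃ hr₂ hne₃₂
  -- the K-linear map A → Π A/Iᵢ
  let L : A →ₗ[K] ∀ i, A ⧸ I i := LinearMap.pi fun i => (Ideal.Quotient.mkₐ K (I i)).toLinearMap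
  have hLsurj : Function.Surjective L := by
    intro x
    obtain ⟨r, hr⟩ := Ideal.pi_quotient_surjective hpair x
    exact ⟨r, funext fun i => hr i⟩
  haveI : ∀ i, (I i).IsMaximal := by
    intro i; fin_cases i <;> simpa [hI] using by
      first
        | exact hmax _ hr₁
        | exact hmax _ hr₂
        | exact hmax _ hr₃
  have hdim : Module.finrank K (∀ i, A ⧸ I i) ≤ 2 := by
    have hrg : Module.finrank K (∀ i, A ⧸ I i) = Module.finrank K (LinearMap.range L) := by
      rw [LinearMap.range_eq_top.mpr hLsurj, finrank_top]
    rw [hrg, ← h2]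
    exact L.finrank_range_le
  have hge : 3 ≤ Module.finrank K (∀ i, A ⧸ I i) := by
    rw [Module.finrank_pi_fintype]
    have : ∀ i, 1 ≤ Module.finrank K (A ⧸ I i) := by
      intro i
      haveI : Nontrivial (A ⧸ I i) := Ideal.Quotient.nontrivial_iff.mpr (Ideal.IsMaximal.ne_top inferInstance)
      exact Module.finrank_pos
    calc (3 : ℕ) = ∑ _i : Fin 3, 1 := by simp
    _ ≤ ∑ i, Module.finrank K (A ⧸ I i) := Finset.sum_le_sum fun i _ => this i
  omega

theorem stmt_19 (S T : Type*) [CommRing S] [IsDomain S] [IsNoetherianRing S]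
    [CommRing T] [Algebra S T] (hinj : Function.Injective (algebraMap S T))
    [Module.Free S T] (hrank : Module.finrank S T = 2) :
    ∃ p q : Ideal T, associatedPrimes T T ⊆ {p, q} := by
  classical
  set K := FractionRing S
  set M : Submonoid T := Algebra.algebraMapSubmonoid T (nonZeroDivisors S) with hM
  let T' := K ⊗[S] T
  -- T' is a localization of T at M
  haveI : Module.Finite S T := Module.finite_of_finrank_pos (by omega)
  haveI hloc : IsLocalization M T' := by
    rw [← isLocalizedModule_iff_isLocalization]
    rw [isLocalizedModule_iff_isBaseChange (S := nonZeroDivisors S) (A := K)]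
    have heq : (IsScalarTower.toAlgHom S T T').toLinearMap = TensorProduct.mk S K T 1 := by
      ext x; rfl
    rw [heq]
    exact TensorProduct.isBaseChange S T K
  haveI : Module.Finite K T' := Module.Finite.base_change S K T
  obtain ⟨P, Q, hPQ⟩ := aux_two_primes K T'
    (by rw [Module.finrank_baseChange, hrank])
  refine ⟨Ideal.comap (algebraMap T T') P, Ideal.comap (algebraMap T T') Q, ?_⟩
  intro p hp
  have hprime : p.IsPrime := hp.1
  have hdisj : Disjoint (M : Set T) (p : Set T) := by
    rw [Set.disjoint_left]
    rintro t ⟨s, hs, rfl⟩ htp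
    obtain ⟨x, hx⟩ := hp.2
    have hx0 : x ≠ 0 := by
      rintro rfl
      refine hprime.ne_top ?_
      rw [hx]; simp
    obtain ⟨n, hn⟩ := (Ideal.mem_radical_iff.mp (hx ▸ htp))
    have h0 : algebraMap S T (s ^ n) • x = 0 := by
      simpa [Submodule.mem_colon_singleton, map_pow] using hn
    rw [algebraMap_smul] at h0
    rcases smul_eq_zero.mp h0 with h | h
    · exact nonZeroDivisors.ne_zero (pow_mem hs n) h
    · exact hx0 h
  have hmapP : (Ideal.map (algebraMap T T') p).IsPrime :=
    IsLocalization.isPrime_of_isPrime_disjoint M T' p hprime hdisj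
  have hcm := IsLocalization.comap_map_of_isPrime_disjoint M T' hprime hdisj
  rcases hPQ _ hmapP with h | h
  · left; rw [← hcm, h]
  · right
    rw [← hcm, h]
    exact Set.mem_singleton _
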